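/- Define σ_n = e^{−iδ} for n ≤ −1 and σ_n = e^{iδ} for n ≥ 0. Let y = (y_n)_{n∈ℤ} satisfy −Δ²y_{n−1} + q_n y_n = f_n for n ∈ ℤ₀ together with the impulse conditions y_{−1} = y₁ and Δy_{−1} = e^{2iδ} Δy₁. Then for all integers a ≤ −1 and b ≥ 2: (cos δ)·[∑_{n=a}^{−1} + ∑_{n=2}^{b}] (|Δy_n|² + q_n |y_n|²) = Re{ σ_b (Δy_b) conj(y_{b+1}) − σ_{a−1} (Δy_{a−1}) conj(y_a) + [∑_{n=a}^{−1} + ∑_{n=2}^{b}] σ_n f_n conj(y_n) }. -/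

import Mathlib

open ComplexConjugate

/- The nonhomogeneous problem (5.5)–(5.6): −Δ²y_{n−1} + q_n y_n = f_n on
   ℤ₀ = ℤ \ {0,1}, with impulse conditions y_{−1} = y₁, Δy_{−1} = e^{2iδ} Δy₁. -/
def IsSolQ (δ : ℝ) (q : ℤ → ℝ) (f : ℤ → ℂ) (y : ℤ → ℂ) : Prop :=
  (∀ n : ℤ, n ≠ 0 → n ≠ 1 →
    -(y (n + 1) - 2 * y n + y (n - 1)) + (q n : ℂ) * y n = f n) ∧
  y (-1) = y 1 ∧
  y 0 - y (-1) = Complex.exp (2 * (δ : ℂ) * Complex.I) * (y 2 - y 1)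

/-- σ_n = e^{−iδ} for n ≤ −1 and σ_n = e^{iδ} for n ≥ 0. -/
noncomputable def sigma (δ : ℝ) (n : ℤ) : ℂ :=
  if n ≤ -1 then Complex.exp (-(δ : ℂ) * Complex.I) else Complex.exp ((δ : ℂ) * Complex.I)

lemma mul_conj_self' (z : ℂ) : ((‖z‖ : ℝ) : ℂ) ^ 2 = z * conj z := by
  rw [Complex.mul_conj]; norm_cast
  rw [Complex.normSq_eq_norm_sq]

/-- the weighted energy identity (Lemma 6.1):
(cos δ)·[∑_{n=a}^{−1} + ∑_{n=2}^{b}] (|Δy_n|² + q_n |y_n|²)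
 = Re{ σ_b (Δy_b) conj(y_{b+1}) − σ_{a−1} (Δy_{a−1}) conj(y_a)
       + [∑_{n=a}^{−1} + ∑_{n=2}^{b}] σ_n f_n conj(y_n) }. -/
theorem weighted_energy_identity (δ : ℝ) (hδ : 0 ≤ δ ∧ δ < Real.pi / 2)
    (q : ℤ → ℝ) (f y : ℤ → ℂ) (hy : IsSolQ δ q f y)
    (a b : ℤ) (ha : a ≤ -1) (hb : 2 ≤ b) :
    Real.cos δ *
      ((∑ n ∈ Finset.Icc a (-1 : ℤ), (‖y (n + 1) - y n‖ ^ 2 + q n * ‖y n‖ ^ 2)) +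
       (∑ n ∈ Finset.Icc (2 : ℤ) b, (‖y (n + 1) - y n‖ ^ 2 + q n * ‖y n‖ ^ 2))) =
    (sigma δ b * (y (b + 1) - y b) * conj (y (b + 1)) -
      sigma δ (a - 1) * (y a - y (a - 1)) * conj (y a) +
      ((∑ n ∈ Finset.Icc a (-1 : ℤ), sigma δ n * f n * conj (y n)) +
       (∑ n ∈ Finset.Icc (2 : ℤ) b, sigma δ n * f n * conj (y n)))).re := by
  obtain ⟨heq, himp1, himp2⟩ := hy
  set ca := Complex.exp (-(δ : ℂ) * Complex.I) with hca
  set cb := Complex.exp ((δ : ℂ) * Complex.I) with hcb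
  set g : ℤ → ℝ := fun n => ‖y (n + 1) - y n‖ ^ 2 + q n * ‖y n‖ ^ 2 with hg
  -- per-term identity
  have hterm : ∀ n : ℤ, n ≠ 0 → n ≠ 1 → f n * conj (y n) =
      ((g n : ℝ) : ℂ) -
      ((y (n + 1) - y n) * conj (y (n + 1)) - (y n - y (n - 1)) * conj (y n)) := by
    intro n h0 h1
    rw [← heq n h0 h1, hg]
    push_cast
    rw [mul_conj_self' (y (n + 1) - y n), mul_conj_self' (y n)]
    simp only [map_sub]
    ring
  -- telescoping on [2, b]
  have hsum2 : ∀ c : ℤ, 2 ≤ c → (∑ n ∈ Finset.Icc (2 : ℤ) c, f n * conj (y n)) =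
      (∑ n ∈ Finset.Icc (2 : ℤ) c, ((g n : ℝ) : ℂ)) -
      ((y (c + 1) - y c) * conj (y (c + 1)) - (y 2 - y 1) * conj (y 2)) := by
    refine Int.le_induction ?_ ?_
    · rw [Finset.Icc_self, Finset.sum_singleton, Finset.sum_singleton,
          hterm 2 (by norm_num) (by norm_num)]
      norm_num
    · intro n hn ih
      have hins : Finset.Icc (2 : ℤ) (n + 1) = insert (n + 1) (Finset.Icc 2 n) := by
        ext x; simp only [Finset.mem_Icc, Finset.mem_insert]; omega
      have hnm : (n + 1 : ℤ) ∉ Finset.Icc (2 : ℤ) n := by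
        simp only [Finset.mem_Icc]; omega
      rw [hins, Finset.sum_insert hnm, Finset.sum_insert hnm, ih,
        hterm (n + 1) (by omega) (by omega), add_sub_cancel_right]
      ring
  -- telescoping on [a, -1]
  have hsum1 : ∀ c : ℤ, c ≤ -1 → (∑ n ∈ Finset.Icc c (-1 : ℤ), f n * conj (y n)) =
      (∑ n ∈ Finset.Icc c (-1 : ℤ), ((g n : ℝ) : ℂ)) -
      ((y 0 - y (-1)) * conj (y 0) - (y c - y (c - 1)) * conj (y c)) := by
    refine Int.le_induction_down ?_ ?_
    · rw [Finset.Icc_self, Finset.sum_singleton, Finset.sum_singleton,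
          hterm (-1) (by norm_num) (by norm_num)]
      norm_num
    · intro n hn ih
      have hins : Finset.Icc (n - 1) (-1 : ℤ) = insert (n - 1) (Finset.Icc n (-1)) := by
        ext x; simp only [Finset.mem_Icc, Finset.mem_insert]; omega
      have hnm : (n - 1 : ℤ) ∉ Finset.Icc n (-1 : ℤ) := by
        simp only [Finset.mem_Icc]; omega
      have hx : (n - 1 + 1 : ℤ) = n := by ring
      rw [hins, Finset.sum_insert hnm, Finset.sum_insert hnm, ih,
        hterm (n - 1) (by omega) (by omega), hx]
      ring
  -- sigma values
  have hσb : sigma δ b = cb := by rw [sigma, if_neg (by omega)]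
  have hσa : sigma δ (a - 1) = ca := by rw [sigma, if_pos (by omega)]
  have hσneg : ∀ n ∈ Finset.Icc a (-1 : ℤ),
      sigma δ n * f n * conj (y n) = ca * (f n * conj (y n)) := by
    intro n hn; simp only [Finset.mem_Icc] at hn
    rw [sigma, if_pos hn.2]; ring
  have hσpos : ∀ n ∈ Finset.Icc (2 : ℤ) b,
      sigma δ n * f n * conj (y n) = cb * (f n * conj (y n)) := by
    intro n hn; simp only [Finset.mem_Icc] at hn
    rw [sigma, if_neg (by omega)]; ring
  rw [hσb, hσa, Finset.sum_congr rfl hσneg, Finset.sum_congr rfl hσpos,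
    ← Finset.mul_sum, ← Finset.mul_sum, hsum1 a ha, hsum2 b hb]
  -- real sums as complex casts
  have hGa : (∑ n ∈ Finset.Icc a (-1 : ℤ), ((g n : ℝ) : ℂ)) =
      (((∑ n ∈ Finset.Icc a (-1 : ℤ), g n : ℝ)) : ℂ) := by push_cast; rfl
  have hGb : (∑ n ∈ Finset.Icc (2 : ℤ) b, ((g n : ℝ) : ℂ)) =
      (((∑ n ∈ Finset.Icc (2 : ℤ) b, g n : ℝ)) : ℂ) := by push_cast; rfl
  rw [hGa, hGb]
  -- the imaginary boundary term
  have hce : ca * Complex.exp (2 * (δ : ℂ) * Complex.I) = cb := by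
    rw [hca, hcb, ← Complex.exp_add]; ring_nf
  have hexpconj : conj (Complex.exp (2 * (δ : ℂ) * Complex.I)) =
      Complex.exp (-(2 * (δ : ℂ)) * Complex.I) := by
    rw [← Complex.exp_conj,
      show (2 * (δ : ℂ) * Complex.I) = ((2 * δ : ℝ) : ℂ) * Complex.I by push_cast; ring,
      map_mul, Complex.conj_ofReal, Complex.conj_I]
    congr 1; push_cast; ring
  have hcbce : cb * Complex.exp (-(2 * (δ : ℂ)) * Complex.I) = ca := by
    rw [hca, hcb, ← Complex.exp_add]; ring_nf
  have hy0 : y 0 = y 1 + Complex.exp (2 * (δ : ℂ) * Complex.I) * (y 2 - y 1) := by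
    linear_combination himp2 + himp1
  have hconjy0 : conj (y 0) = conj (y 1) +
      Complex.exp (-(2 * (δ : ℂ)) * Complex.I) * (conj (y 2) - conj (y 1)) := by
    rw [hy0]; simp only [map_add, map_mul, map_sub, hexpconj]
  have himag : cb * ((y 2 - y 1) * conj (y 2)) - ca * ((y 0 - y (-1)) * conj (y 0)) =
      (cb - ca) * ((‖y 2 - y 1‖ ^ 2 : ℝ) : ℂ) := by
    push_cast
    rw [mul_conj_self' (y 2 - y 1), map_sub, himp2, hconjy0]
    linear_combination ((y 2 - y 1) * (conj (y 1) +
        Complex.exp (-(2 * (δ : ℂ)) * Complex.I) * (conj (y 2) - conj (y 1)))) * hce.symm +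
      (-((y 2 - y 1) * (conj (y 2) - conj (y 1)))) * hcbce
  -- real parts of the exponentials
  have hcare : ca.re = Real.cos δ := by
    rw [hca, show -(δ : ℂ) = ((-δ : ℝ) : ℂ) by push_cast; ring,
      Complex.exp_ofReal_mul_I_re]; simp
  have hcbre : cb.re = Real.cos δ := Complex.exp_ofReal_mul_I_re δ
  -- assemble
  have hinner : cb * (y (b + 1) - y b) * conj (y (b + 1)) -
      ca * (y a - y (a - 1)) * conj (y a) +
      (ca * ((((∑ n ∈ Finset.Icc a (-1 : ℤ), g n : ℝ)) : ℂ) -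
        ((y 0 - y (-1)) * conj (y 0) - (y a - y (a - 1)) * conj (y a))) +
       cb * ((((∑ n ∈ Finset.Icc (2 : ℤ) b, g n : ℝ)) : ℂ) -
        ((y (b + 1) - y b) * conj (y (b + 1)) - (y 2 - y 1) * conj (y 2)))) =
      ca * (((∑ n ∈ Finset.Icc a (-1 : ℤ), g n : ℝ)) : ℂ) +
      cb * (((∑ n ∈ Finset.Icc (2 : ℤ) b, g n : ℝ)) : ℂ) +
      (cb - ca) * ((‖y 2 - y 1‖ ^ 2 : ℝ) : ℂ) := by
    rw [← himag]; ring
  rw [hinner]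
  simp only [Complex.add_re, Complex.mul_re, Complex.sub_re, Complex.ofReal_re,
    Complex.ofReal_im, mul_zero, sub_zero, hcare, hcbre]
  ring
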